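/- (Y-Gate Even Principle for Pauli mapping of real symmetric matrices.) Let n : ℕ and let M be a 2^n × 2^n complex matrix all of whose entries are real and which is symmetric (Mᵀ = M). Then for every Pauli string a : Fin n → Fin 4 containing an odd number of Y labels, the projection coefficient of M on g_a vanishes: Tr(M * g_a) = 0 (equivalently, c_a = 2^{-n} · Tr(M * g_a) = 0). -/
import Mathlib


open Matrix

/-- The four Pauli matrices σ_I, σ_X, σ_Y, σ_Z. -/
noncomputable def pauli : Fin 4 → Matrix (Fin 2) (Fin 2) ℂ
  | 0 => 1
  | 1 => !![0, 1; 1, 0]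
  | 2 => !![0, -Complex.I; Complex.I, 0]
  | 3 => !![1, 0; 0, -1]

/-- The `n`-qubit Pauli tensor `g_a = σ_{a 0} ⊗ ⋯ ⊗ σ_{a (n-1)}`, realized as a
matrix indexed by `Fin n → Fin 2` (a type of cardinality `2 ^ n`), whose entries
are given by the usual Kronecker-product formula. -/
noncomputable def pauliTensor {n : ℕ} (a : Fin n → Fin 4) :
    Matrix (Fin n → Fin 2) (Fin n → Fin 2) ℂ :=
  Matrix.of fun i j => ∏ k, pauli (a k) (i k) (j k)

/-- The number of `Y` labels in the Pauli string `a`. -/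
def numY {n : ℕ} (a : Fin n → Fin 4) : ℕ :=
  (Finset.univ.filter fun k => a k = 2).card

lemma pauli_transpose (m : Fin 4) (i j : Fin 2) :
    pauli m j i = (if m = 2 then (-1 : ℂ) else 1) * pauli m i j := by
  fin_cases m <;> fin_cases i <;> fin_cases j <;>
    simp [pauli, Matrix.one_apply]

lemma pauliTensor_transpose {n : ℕ} (a : Fin n → Fin 4) :
    (pauliTensor a)ᵀ = ((-1 : ℂ) ^ numY a) • pauliTensor a := by
  ext i j
  simp only [Matrix.transpose_apply, pauliTensor, Matrix.of_apply,
    Matrix.smul_apply, smul_eq_mul]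
  rw [show (∏ k, pauli (a k) (j k) (i k)) =
      ∏ k, (if a k = 2 then (-1 : ℂ) else 1) * pauli (a k) (i k) (j k) by
    exact Finset.prod_congr rfl fun k _ => pauli_transpose (a k) (i k) (j k)]
  rw [Finset.prod_mul_distrib, Finset.prod_ite, Finset.prod_const,
    Finset.prod_const_one, mul_one, numY]

theorem yGate_even_principle (n : ℕ)
    (M : Matrix (Fin n → Fin 2) (Fin n → Fin 2) ℂ)
    (hreal : ∀ i j, (M i j).im = 0) (hsym : Mᵀ = M)
    (a : Fin n → Fin 4) (hodd : Odd (numY a)) :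
    (M * pauliTensor a).trace = 0 := by
  have h : (M * pauliTensor a).trace = -(M * pauliTensor a).trace := by
    conv_lhs => rw [← Matrix.trace_transpose, Matrix.transpose_mul,
      pauliTensor_transpose, hsym, hodd.neg_one_pow]
    rw [Matrix.smul_mul, Matrix.trace_smul, Matrix.trace_mul_comm]
    simp
  linear_combination h / 2
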